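/- Let σ > 0 and u ≠ 0. Let (Y_j)_{j≥1} be an i.i.d. sequence of real random variables with law N(0,σ²), and let (J_j)_{j≥1} be an i.i.d. sequence, independent of (Y_j), whose common law is symmetric and satisfies E[cos(u·J₁)] > 0; set W_j := Y_j + J_j. For each k let σ̂²_{k,−} be the ECF spot variance estimator computed from W₁,…,W_k and σ̂²_{k,+} the ECF spot variance estimator computed from W_{k+1},…,W_{2k}. Then σ̂²_{k,+} − σ̂²_{k,−} → 0 almost surely as k → ∞. (This is the bias-cancellation phenomenon of Remark 3: the jump-induced biases of the spot volatility estimates over consecutive windows cancel in their difference, which is the key to the estimators of leverage effect and volatility of volatility.) -/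

import Mathlib

open MeasureTheory ProbabilityTheory Real Finset Filter

open scoped NNReal ENNReal

section Helpers
open Complex

lemma gauss_complex_integral {v : ℝ} (hv : 0 < v) (u : ℝ) :
    ∫ x : ℝ, Complex.exp (-(((2*v)⁻¹ : ℝ) : ℂ) * x ^ 2 + u * x * Complex.I)
      = ((Real.sqrt (2*π*v) * Real.exp (-(u^2) * v / 2) : ℝ) : ℂ) := by
  set b : ℂ := (((2*v)⁻¹ : ℝ) : ℂ) with hb
  have hbre : 0 < b.re := by simp [hb]; positivity
  set c : ℝ := -(u*v) with hc
  have hvne : (v:ℂ) ≠ 0 := by exact_mod_cast hv.ne'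
  have hfun : ∀ x : ℝ, Complex.exp (-b * (x + c*Complex.I)^2)
      = Complex.exp (((u^2*v/2 : ℝ) : ℂ)) * Complex.exp (-b * x^2 + u*x*Complex.I) := by
    intro x
    rw [← Complex.exp_add]
    congr 1
    have : (c : ℂ) = -(u*v) := by push_cast [hc]; ring
    rw [this, hb]
    push_cast
    field_simp
    linear_combination (-(u:ℂ)^2*(v:ℂ)^2) * Complex.I_sq
  have key := GaussianFourier.integral_cexp_neg_mul_sq_add_real_mul_I hbre c
  have h2 : ∫ x : ℝ, Complex.exp (-b * (x + c*Complex.I)^2)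
      = Complex.exp (((u^2*v/2 : ℝ) : ℂ)) * ∫ x : ℝ, Complex.exp (-b * x^2 + u*x*Complex.I) := by
    simp_rw [hfun]
    rw [integral_const_mul]
  have hπb : (↑π / b) = ((2*π*v : ℝ) : ℂ) := by
    rw [hb]; push_cast; field_simp
  have hpow : (↑π / b) ^ (1/2 : ℂ) = ((Real.sqrt (2*π*v) : ℝ) : ℂ) := by
    rw [hπb, Real.sqrt_eq_rpow]
    rw [show ((1:ℂ)/2) = ((1/2 : ℝ) : ℂ) by norm_num]
    rw [← Complex.ofReal_cpow (by positivity)]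
  rw [h2, hpow] at key
  have h3 : (∫ x : ℝ, Complex.exp (-b * x^2 + u*x*Complex.I))
      = ((Real.sqrt (2*π*v) : ℝ) : ℂ) / Complex.exp (((u^2*v/2 : ℝ) : ℂ)) :=
    eq_div_of_mul_eq (Complex.exp_ne_zero _) (by rw [mul_comm]; exact key)
  rw [h3, div_eq_mul_inv, ← Complex.exp_neg, ← Complex.ofReal_neg, ← Complex.ofReal_exp,
    ← Complex.ofReal_mul]
  norm_cast
  ring_nf

lemma integrable_cexp_aux {v : ℝ} (hv : 0 < v) (u : ℝ) :
    Integrable (fun x : ℝ => Complex.exp (-(((2*v)⁻¹ : ℝ) : ℂ) * x ^ 2 + u * x * Complex.I)) := by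
  set b : ℂ := (((2*v)⁻¹ : ℝ) : ℂ) with hb
  have hbre : 0 < b.re := by simp [hb]; positivity
  set c : ℝ := -(u*v) with hc
  have hvne : (v:ℂ) ≠ 0 := by exact_mod_cast hv.ne'
  have hfun : ∀ x : ℝ, Complex.exp (-b * x^2 + u*x*Complex.I)
      = Complex.exp (-((u^2*v/2 : ℝ) : ℂ)) * Complex.exp (-b * (x + c*Complex.I)^2) := by
    intro x
    rw [← Complex.exp_add]
    congr 1
    have : (c : ℂ) = -(u*v) := by push_cast [hc]; ring
    rw [this, hb]
    push_cast
    field_simp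
    linear_combination ((u:ℂ)^2*(v:ℂ)^2) * Complex.I_sq
  simp_rw [hfun]
  exact (GaussianFourier.integrable_cexp_neg_mul_sq_add_real_mul_I hbre c).const_mul _

lemma integral_cos_gaussianReal {v : ℝ≥0} (hv : v ≠ 0) (u : ℝ) :
    ∫ x, Real.cos (u * x) ∂(gaussianReal 0 v) = Real.exp (-(u^2) * v / 2) := by
  have hv' : 0 < (v:ℝ) := by positivity
  set f : ℝ → ℂ := fun x => Complex.exp (-(((2*(v:ℝ))⁻¹ : ℝ) : ℂ) * x ^ 2 + u * x * Complex.I)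
    with hf
  have hre : ∀ x : ℝ, (f x).re = Real.exp (-((2*(v:ℝ))⁻¹ * x^2)) * Real.cos (u*x) := by
    intro x
    simp only [hf]
    have hz : (-(((2*(v:ℝ))⁻¹ : ℝ):ℂ) * x^2 + u*x*Complex.I)
        = Complex.ofReal (-((2*(v:ℝ))⁻¹ * x^2)) + ((u*x : ℝ) : ℂ) * Complex.I := by
      push_cast; ring
    rw [hz, Complex.exp_re]
    simp [← Complex.ofReal_pow]
  have hpt : ∀ x : ℝ, Real.toNNReal (gaussianPDFReal 0 v x) • Real.cos (u*x)
      = (√(2*π*v))⁻¹ * (f x).re := by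
    intro x
    rw [NNReal.smul_def, Real.coe_toNNReal _ (gaussianPDFReal_nonneg 0 v x), hre x,
      gaussianPDFReal]
    rw [sub_zero, show -x^2/(2*(v:ℝ)) = -((2*(v:ℝ))⁻¹ * x^2) by ring, smul_eq_mul, mul_assoc]
  rw [gaussianReal_of_var_ne_zero _ hv]
  rw [show gaussianPDF 0 v = fun x => ((Real.toNNReal (gaussianPDFReal 0 v x) : ℝ≥0) : ℝ≥0∞)
      from rfl]
  rw [integral_withDensity_eq_integral_smul (measurable_gaussianPDFReal 0 v).real_toNNReal _]
  calc ∫ x, Real.toNNReal (gaussianPDFReal 0 v x) • Real.cos (u * x)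
      = ∫ x, (√(2*π*v))⁻¹ * (f x).re := by simp_rw [hpt]
    _ = (√(2*π*v))⁻¹ * (∫ x, f x).re := by
        rw [integral_const_mul]
        congr 1
        exact integral_re (integrable_cexp_aux hv' u)
    _ = Real.exp (-(u^2) * v / 2) := by
        rw [hf, gauss_complex_integral hv' u, Complex.ofReal_re, ← mul_assoc,
          inv_mul_cancel₀ (by positivity), one_mul]

lemma endgame_aux {m : ℝ} (hm : 0 < m) {A : ℕ → ℝ} (hA : Tendsto A atTop (nhds m)) :
    Tendsto (fun k : ℕ => Real.log (max (A k) ((Real.sqrt k)⁻¹))) atTop (nhds (Real.log m)) := by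
  have hs : Tendsto (fun k : ℕ => Real.sqrt k) atTop atTop := by
    have h1 : Tendsto Real.sqrt atTop atTop := by
      rw [show Real.sqrt = fun x : ℝ => x ^ (1/2 : ℝ) from funext fun x => Real.sqrt_eq_rpow x]
      exact tendsto_rpow_atTop (by norm_num)
    exact h1.comp tendsto_natCast_atTop_atTop
  have h0 : Tendsto (fun k : ℕ => ((Real.sqrt k)⁻¹ : ℝ)) atTop (nhds 0) :=
    hs.inv_tendsto_atTop
  have hmax : Tendsto (fun k : ℕ => max (A k) ((Real.sqrt k)⁻¹)) atTop (nhds m) := by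
    have h := hA.max h0
    rwa [max_eq_left hm.le] at h
  exact ((Real.continuousAt_log hm.ne').tendsto.comp hmax)

lemma integrable_abs_le_one {α : Type*} [MeasurableSpace α] {μ : Measure α} [IsFiniteMeasure μ]
    {f : α → ℝ} (hf : AEStronglyMeasurable f μ) (h : ∀ x, |f x| ≤ 1) : Integrable f μ :=
  (integrable_const 1).mono' hf (Filter.Eventually.of_forall (by simpa using h))

end Helpers

/-- Bias cancellation for consecutive windows: with `W_j = Y_j + J_j` (Gaussian plus
an independent symmetric i.i.d. jump component with `E[cos(u·J₁)] > 0`), the difference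
between the ECF spot variance estimators over the windows `W_{k+1},…,W_{2k}` and
`W₁,…,W_k` tends to `0` almost surely. -/
theorem ecf_spot_variance_bias_cancellation {Ω : Type*} [MeasureSpace Ω]
    [IsProbabilityMeasure (ℙ : Measure Ω)]
    (σ u : ℝ) (hσ : 0 < σ) (hu : u ≠ 0)
    (Y J : ℕ → Ω → ℝ)
    (hmeas : ∀ i : ℕ ⊕ ℕ, Measurable (Sum.elim Y J i))
    -- all the variables `Y₁, J₁, Y₂, J₂, …` are jointly independent
    (hindep : iIndepFun (Sum.elim Y J) ℙ)
    -- `(Y_j)` is i.i.d. `N(0,σ²)`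
    (hYlaw : ∀ j, Measure.map (Y j) ℙ = gaussianReal 0 ⟨σ ^ 2, sq_nonneg σ⟩)
    -- `(J_j)` is i.i.d. with a symmetric common law and `E[cos(u·J₁)] > 0`
    (hJid : ∀ j, Measure.map (J j) ℙ = Measure.map (J 1) ℙ)
    (hJsym : Measure.map (fun ω => -(J 1 ω)) ℙ = Measure.map (J 1) ℙ)
    (hψ : 0 < ∫ ω, Real.cos (u * J 1 ω) ∂ℙ)
    (W : ℕ → Ω → ℝ) (hW : ∀ j ω, W j ω = Y j ω + J j ω)
    (estMinus estPlus : ℕ → Ω → ℝ)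
    (hestMinus : ∀ k ω, estMinus k ω
      = -(2 / u ^ 2) * Real.log
          (max ((1 / (k : ℝ)) * ∑ j ∈ Finset.Icc 1 k, Real.cos (u * W j ω))
            ((Real.sqrt k)⁻¹)))
    (hestPlus : ∀ k ω, estPlus k ω
      = -(2 / u ^ 2) * Real.log
          (max ((1 / (k : ℝ)) * ∑ j ∈ Finset.Icc (k + 1) (2 * k), Real.cos (u * W j ω))
            ((Real.sqrt k)⁻¹))) :
    ∀ᵐ ω ∂ℙ, Tendsto (fun k => estPlus k ω - estMinus k ω) atTop (nhds 0) := by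
  classical
  have hYm : ∀ j, Measurable (Y j) := fun j => hmeas (Sum.inl j)
  have hJm : ∀ j, Measurable (J j) := fun j => hmeas (Sum.inr j)
  set v : ℝ≥0 := ⟨σ ^ 2, sq_nonneg σ⟩ with hv
  have hvne : v ≠ 0 := by
    intro h
    have : σ ^ 2 = 0 := congrArg Subtype.val h
    nlinarith
  set μJ : Measure ℝ := Measure.map (J 1) ℙ with hμJ
  have hμJprob : IsProbabilityMeasure μJ := Measure.isProbabilityMeasure_map (hJm 1).aemeasurable
  set g : ℝ × ℝ → ℝ := fun p => Real.cos (u * (p.1 + p.2)) with hg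
  have hgm : Measurable g := by
    apply Measurable.cos
    exact measurable_const.mul (measurable_fst.add measurable_snd)
  set X : ℕ → Ω → ℝ := fun i ω => Real.cos (u * W (i + 1) ω) with hX
  have hXg : ∀ i, X i = g ∘ (fun ω => (Y (i + 1) ω, J (i + 1) ω)) := by
    intro i; funext ω; simp only [hX, hg, Function.comp_apply, hW]
  have hXm : ∀ i, Measurable (X i) := by
    intro i; rw [hXg i]; exact hgm.comp ((hYm _).prodMk (hJm _))
  -- pairwise independence
  have hXindep : Pairwise (Function.onFun (IndepFun · · ℙ) X) := by
    intro a b hab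
    have h := hindep.indepFun_prodMk_prodMk hmeas (Sum.inl (a + 1)) (Sum.inr (a + 1))
      (Sum.inl (b + 1)) (Sum.inr (b + 1)) (by simpa using fun h => hab (by omega))
      (by simp) (by simp) (by simpa using fun h => hab (by omega))
    have h2 := h.comp hgm hgm
    simpa only [Function.onFun, hXg a, hXg b, Sum.elim_inl, Sum.elim_inr] using h2
  -- identical distribution
  have hpair : ∀ j : ℕ, Measure.map (fun ω => (Y j ω, J j ω)) ℙ
      = (gaussianReal 0 v).prod μJ := by
    intro j
    have hind : IndepFun (Y j) (J j) ℙ :=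
      hindep.indepFun (show (Sum.inl j : ℕ ⊕ ℕ) ≠ Sum.inr j by simp)
    rw [(indepFun_iff_map_prod_eq_prod_map_map (hYm j).aemeasurable
      (hJm j).aemeasurable).mp hind, hYlaw j, hJid j]
  have hXid : ∀ i, IdentDistrib (X i) (X 0) ℙ ℙ := by
    intro i
    have hp : IdentDistrib (fun ω => (Y (i + 1) ω, J (i + 1) ω))
        (fun ω => (Y (0 + 1) ω, J (0 + 1) ω)) ℙ ℙ :=
      ⟨((hYm _).prodMk (hJm _)).aemeasurable, ((hYm _).prodMk (hJm _)).aemeasurable,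
        by rw [hpair, hpair]⟩
    have h2 := hp.comp hgm
    rw [hXg i, hXg 0]
    exact h2
  -- integrability
  have hXint : Integrable (X 0) ℙ :=
    integrable_abs_le_one (hXm 0).aestronglyMeasurable (fun ω => Real.abs_cos_le_one _)
  -- the mean is positive
  have hmcos : Measurable fun x : ℝ => Real.cos (u * x) :=
    Real.measurable_cos.comp (measurable_id.const_mul u)
  have hmsin : Measurable fun x : ℝ => Real.sin (u * x) :=
    Real.measurable_sin.comp (measurable_id.const_mul u)
  have hcosJ : Integrable (fun x => Real.cos (u * x)) μJ :=
    integrable_abs_le_one hmcos.aestronglyMeasurable (fun x => Real.abs_cos_le_one _)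
  have hsinJ : Integrable (fun x => Real.sin (u * x)) μJ :=
    integrable_abs_le_one hmsin.aestronglyMeasurable (fun x => Real.abs_sin_le_one _)
  have hS0 : ∫ x, Real.sin (u * x) ∂μJ = 0 := by
    have h1 : ∫ x, Real.sin (u * x) ∂(Measure.map (fun ω => -(J 1 ω)) ℙ)
        = ∫ x, Real.sin (u * x) ∂μJ := by rw [hJsym]
    rw [integral_map (show AEMeasurable (fun ω => -(J 1 ω)) ℙ from (hJm 1).neg.aemeasurable) hmsin.aestronglyMeasurable, hμJ,
      integral_map (hJm 1).aemeasurable hmsin.aestronglyMeasurable] at h1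
    simp only [mul_neg, Real.sin_neg] at h1
    rw [integral_neg] at h1
    rw [hμJ, integral_map (hJm 1).aemeasurable hmsin.aestronglyMeasurable]
    linarith
  have hCpos : 0 < ∫ x, Real.cos (u * x) ∂μJ := by
    rw [hμJ, integral_map (hJm 1).aemeasurable hmcos.aestronglyMeasurable]
    exact hψ
  have hgint : Integrable g ((gaussianReal 0 v).prod μJ) :=
    integrable_abs_le_one hgm.aestronglyMeasurable (fun p => Real.abs_cos_le_one _)
  have hmean : ∫ ω, X 0 ω ∂ℙ
      = Real.exp (-(u ^ 2) * v / 2) * ∫ x, Real.cos (u * x) ∂μJ := by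
    have h1 : ∫ ω, X 0 ω ∂ℙ = ∫ p, g p ∂((gaussianReal 0 v).prod μJ) := by
      rw [← hpair 1]
      rw [integral_map ((hYm 1).prodMk (hJm 1)).aemeasurable hgm.aestronglyMeasurable]
      rw [hXg 0]
      rfl
    rw [h1, MeasureTheory.integral_prod _ hgint]
    have hinner : ∀ y : ℝ, (∫ j, g (y, j) ∂μJ)
        = Real.cos (u * y) * ∫ x, Real.cos (u * x) ∂μJ := by
      intro y
      have hpt : ∀ j : ℝ, g (y, j)
          = Real.cos (u * y) * Real.cos (u * j) - Real.sin (u * y) * Real.sin (u * j) := by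
        intro j; simp only [hg]; rw [mul_add, Real.cos_add]
      simp_rw [hpt]
      rw [integral_sub (hcosJ.const_mul _) (hsinJ.const_mul _), integral_const_mul,
        integral_const_mul, hS0, mul_zero, sub_zero]
    simp_rw [hinner]
    rw [integral_mul_const, integral_cos_gaussianReal hvne u]
  have hm0 : 0 < ∫ ω, X 0 ω ∂ℙ := by
    rw [hmean]; positivity
  -- strong law of large numbers
  have hslln := ProbabilityTheory.strong_law_ae X hXint hXindep hXid
  filter_upwards [hslln] with ω hω
  set m : ℝ := ∫ ω', X 0 ω' ∂ℙ with hm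
  set S : ℕ → ℝ := fun k => ∑ j ∈ Finset.Icc 1 k, Real.cos (u * W j ω) with hSdef
  have hSr : ∀ k, ∑ i ∈ Finset.range k, X i ω = S k := by
    intro k
    have hSk : S k = ∑ j ∈ Finset.Icc 1 k, Real.cos (u * W j ω) := rfl
    rw [hSk, ← Finset.Ico_add_one_right_eq_Icc, Finset.sum_Ico_eq_sum_range]
    exact Finset.sum_congr (by norm_num) fun i _ => by rw [hX, Nat.add_comm]
  have hT : Tendsto (fun k : ℕ => (k : ℝ)⁻¹ * S k) atTop (nhds m) := by
    have := hω
    simp_rw [smul_eq_mul, hSr] at this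
    exact this
  have hA : Tendsto (fun k : ℕ => (1 / (k : ℝ)) * S k) atTop (nhds m) := by
    simpa only [one_div] using hT
  -- the second-window average
  have hsplit : ∀ k : ℕ, (∑ j ∈ Finset.Icc (k + 1) (2 * k), Real.cos (u * W j ω))
      = S (2 * k) - S k := by
    intro k
    have hc := Finset.sum_Ioc_consecutive (fun j => Real.cos (u * W j ω))
      (Nat.zero_le k) (by omega : k ≤ 2 * k)
    have e1 : ∀ n : ℕ, S n = ∑ j ∈ Finset.Ioc 0 n, Real.cos (u * W j ω) := by
      intro n; rw [hSdef]; simp only [← Finset.Icc_add_one_left_eq_Ioc, zero_add]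
    have e2 : Finset.Icc (k + 1) (2 * k) = Finset.Ioc k (2 * k) := Finset.Icc_add_one_left_eq_Ioc _ _
    rw [e2, e1, e1]
    linarith
  have h2k : Tendsto (fun k : ℕ => 2 * k) atTop atTop :=
    tendsto_atTop_mono (fun k => by simp only [id_eq]; omega) tendsto_id
  have hB : Tendsto (fun k : ℕ => (1 / (k : ℝ))
      * ∑ j ∈ Finset.Icc (k + 1) (2 * k), Real.cos (u * W j ω)) atTop (nhds m) := by
    have hlim : Tendsto (fun k : ℕ => 2 * ((((2 * k : ℕ) : ℝ))⁻¹ * S (2 * k)) - (k : ℝ)⁻¹ * S k)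
        atTop (nhds (2 * m - m)) := ((hT.comp h2k).const_mul 2).sub hT
    rw [show 2 * m - m = m by ring] at hlim
    apply hlim.congr'
    filter_upwards [eventually_ge_atTop 1] with k hk
    have hkne : (k : ℝ) ≠ 0 := Nat.cast_ne_zero.mpr (by omega)
    rw [hsplit k]
    push_cast
    field_simp
  -- conclude
  have hlogA := endgame_aux hm0 hA
  have hlogB := endgame_aux hm0 hB
  have hfin := (hlogB.const_mul (-(2 / u ^ 2))).sub (hlogA.const_mul (-(2 / u ^ 2)))
  rw [sub_self] at hfin
  apply hfin.congr
  intro k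
  rw [hestPlus, hestMinus]
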